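/- Let R ⊆ ℕ be a set of Bohr recurrence. Then for every ε > 0 and every d ∈ ℕ, there exists N ∈ ℕ such that for every α ∈ ℝ^d there exists r ∈ R with r ≤ N such that every coordinate of rα is within ε of an integer. -/

import Mathlib

/-- A set `R ⊆ ℕ` is a set of Bohr recurrence if for every `d`, every `α ∈ ℝ^d`
and every `ε > 0`, there is `r ∈ R` such that every coordinate of `rα` is within
`ε` of an integer. -/
def BohrRecurrence (R : Set ℕ) : Prop :=
  ∀ (d : ℕ) (α : Fin d → ℝ) (ε : ℝ), 0 < ε →
    ∃ r ∈ R, ∀ i : Fin d, ∃ k : ℤ, |(r : ℝ) * α i - (k : ℝ)| < ε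

/-- For a set of Bohr recurrence `R`, every `ε > 0` and dimension `d`, there is a
uniform bound `N` such that for every `α ∈ ℝ^d` some `r ∈ R` with `r ≤ N` has every
coordinate of `rα` within `ε` of an integer. -/
theorem bohr_recurrence_uniform_bound (R : Set ℕ) (hR : BohrRecurrence R)
    (ε : ℝ) (hε : 0 < ε) (d : ℕ) :
    ∃ N : ℕ, ∀ α : Fin d → ℝ,
      ∃ r ∈ R, r ≤ N ∧ ∀ i : Fin d, ∃ k : ℤ, |(r : ℝ) * α i - (k : ℝ)| < ε := by
  by_contra h
  push_neg at h
  -- h : ∀ N, ∃ α, ∀ r ∈ R, r ≤ N → ∃ i, ∀ k, ε ≤ |r * α i - k|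
  choose α hα using h
  -- Replace α by its fractional parts, landing in the compact cube [0,1]^d.
  set β : ℕ → (Fin d → ℝ) := fun N i => Int.fract (α N i) with hβ
  have hβfail : ∀ N, ∀ r ∈ R, r ≤ N → ∃ i, ∀ k : ℤ, ε ≤ |(r : ℝ) * β N i - (k : ℝ)| := by
    intro N r hrR hrN
    obtain ⟨i, hi⟩ := hα N r hrR hrN
    refine ⟨i, fun k => ?_⟩
    have := hi (k + r * ⌊α N i⌋)
    have hfr : β N i = α N i - ⌊α N i⌋ := (Int.self_sub_floor (α N i)).symm
    rw [hfr]
    have : ε ≤ |(r : ℝ) * α N i - ((k : ℝ) + (r : ℝ) * (⌊α N i⌋ : ℝ))| := by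
      exact_mod_cast this
    calc ε ≤ |(r : ℝ) * α N i - ((k : ℝ) + (r : ℝ) * (⌊α N i⌋ : ℝ))| := this
    _ = |(r : ℝ) * (α N i - (⌊α N i⌋ : ℝ)) - (k : ℝ)| := by ring_nf
  have hmem : ∀ N, β N ∈ Set.pi Set.univ (fun _ : Fin d => Set.Icc (0:ℝ) 1) := by
    intro N i _
    exact ⟨Int.fract_nonneg _, le_of_lt (Int.fract_lt_one _)⟩
  have hcomp : IsCompact (Set.pi Set.univ (fun _ : Fin d => Set.Icc (0:ℝ) 1)) :=
    isCompact_univ_pi fun _ => isCompact_Icc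
  obtain ⟨a, ha, φ, hφ, hconv⟩ := hcomp.tendsto_subseq hmem
  obtain ⟨r, hrR, hr⟩ := hR d a (ε/2) (by linarith)
  choose k hk using hr
  -- coordinatewise convergence
  have hconv' : ∀ i : Fin d, Filter.Tendsto (fun j => (r : ℝ) * β (φ j) i)
      Filter.atTop (nhds ((r : ℝ) * a i)) := by
    intro i
    have : Filter.Tendsto (fun j => β (φ j) i) Filter.atTop (nhds (a i)) :=
      (continuous_apply i).continuousAt.tendsto.comp hconv
    exact this.const_mul _
  have hev : ∀ᶠ j in Filter.atTop, ∀ i : Fin d,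
      |(r : ℝ) * β (φ j) i - (r : ℝ) * a i| < ε / 2 := by
    rw [Filter.eventually_all]
    intro i
    have := (hconv' i).eventually (Metric.ball_mem_nhds ((r : ℝ) * a i) (by linarith : (0:ℝ) < ε/2))
    filter_upwards [this] with j hj
    simpa [Real.dist_eq] using hj
  obtain ⟨j, hjr, hj⟩ := ((Filter.eventually_ge_atTop r).and hev).exists
  have hrφ : r ≤ φ j := hjr.trans (hφ.le_apply)
  obtain ⟨i, hi⟩ := hβfail (φ j) r hrR hrφ
  have h1 := hi (k i)
  have h2 := hj i
  have h3 := hk i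
  have h4 := abs_sub_le ((r : ℝ) * β (φ j) i) ((r : ℝ) * a i) ((k i : ℝ))
  linarith
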